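/- The group M_λ = G(A_λ ⊆ B) of order p^{22} has exponent p^6, its center has exponent p^6, and its commutator subgroup has exponent p^4. -/

import Mathlib

namespace Metabelian

variable {B : Type*} [AddCommGroup B]

/-- The subgroup `A` of `B` is bounded by `n`, i.e. `n • a = 0` for all `a ∈ A`. -/
class BoundedSub (A : AddSubgroup B) (n : ℕ) : Prop where
  bound : ∀ a : A, n • (a : B) = 0

lemma val_smul_eq {n : ℕ} (a : B) (h : n • a = 0) (x : ℕ) : (x % n) • a = x • a := by
  conv_rhs => rw [← Nat.mod_add_div x n]
  rw [add_nsmul, mul_nsmul, h, smul_zero, add_zero]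

/-- Birkhoff's construction `G(A ⊆ B) = (A ⊕ B) ⋊_ψ D` with `D = ℤ/n` where `n` bounds `A`:
the underlying set is `A × B × ℤ/n` and the (multiplicatively written) group operation is
`(a,b,d)·(a',b',d') = (a+a', b + d·ι(a') + b', d+d')`. -/
instance mgroup (A : AddSubgroup B) (n : ℕ) [NeZero n] [BoundedSub A n] :
    Group (A × B × ZMod n) where
  mul x y := (x.1 + y.1, x.2.1 + x.2.2.val • (y.1 : B) + y.2.1, x.2.2 + y.2.2)
  one := (0, 0, 0)
  inv x := (-x.1, -x.2.1 + x.2.2.val • (x.1 : B), -x.2.2)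
  mul_assoc x y z := by
    have hb := BoundedSub.bound (A := A) (n := n)
    refine Prod.ext (add_assoc _ _ _) (Prod.ext ?_ (add_assoc _ _ _))
    show x.2.1 + x.2.2.val • (y.1 : B) + y.2.1 + (x.2.2 + y.2.2).val • (z.1 : B) + z.2.1
        = x.2.1 + x.2.2.val • ((y.1 + z.1 : A) : B) + (y.2.1 + y.2.2.val • (z.1 : B) + z.2.1)
    rw [ZMod.val_add, val_smul_eq _ (hb z.1), AddSubgroup.coe_add, smul_add, add_nsmul]
    abel
  one_mul x := by
    refine Prod.ext (zero_add _) (Prod.ext ?_ (zero_add _))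
    show (0 : B) + (0 : ZMod n).val • (x.1 : B) + x.2.1 = x.2.1
    simp
  mul_one x := by
    refine Prod.ext (add_zero _) (Prod.ext ?_ (add_zero _))
    show x.2.1 + x.2.2.val • ((0 : A) : B) + 0 = x.2.1
    simp
  inv_mul_cancel x := by
    have hb := BoundedSub.bound (A := A) (n := n)
    refine Prod.ext (neg_add_cancel _) (Prod.ext ?_ (neg_add_cancel _))
    show -x.2.1 + x.2.2.val • (x.1 : B) + (-x.2.2).val • (x.1 : B) + x.2.1 = 0
    have h2 : ((-x.2.2).val + x.2.2.val) % n = 0 := by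
      rw [← ZMod.val_add, neg_add_cancel, ZMod.val_zero]
    have h3 : x.2.2.val • (x.1 : B) + (-x.2.2).val • (x.1 : B) = 0 := by
      rw [add_comm, ← add_nsmul, ← val_smul_eq _ (hb x.1), h2, zero_nsmul]
    rw [add_assoc, add_assoc, ← add_assoc (x.2.2.val • (x.1 : B)), h3, zero_add, neg_add_cancel]

/-! Birkhoff's example: `B = ℤ/p⁶ ⊕ ℤ/p⁴ ⊕ ℤ/p²` with generators `x, y, z`, and
`A_λ = ⟨p²x + py + z, p²y + pλz⟩`. -/

/-- `B = ℤ/p⁶ ⊕ ℤ/p⁴ ⊕ ℤ/p²`. -/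
abbrev Bb (p : ℕ) := ZMod (p ^ 6) × ZMod (p ^ 4) × ZMod (p ^ 2)

def xgen (p : ℕ) : Bb p := (1, 0, 0)
def ygen (p : ℕ) : Bb p := (0, 1, 0)
def zgen (p : ℕ) : Bb p := (0, 0, 1)

/-- `u = p²x + py + z`. -/
def ugen (p : ℕ) : Bb p := p ^ 2 • xgen p + p • ygen p + zgen p

/-- `v_λ = p²y + pλz`. -/
def vgen (p l : ℕ) : Bb p := p ^ 2 • ygen p + (p * l) • zgen p

/-- `A_λ = ⟨u, v_λ⟩`. -/
def Asub (p l : ℕ) : AddSubgroup (Bb p) := AddSubgroup.closure {ugen p, vgen p l}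

lemma ppow_zero (p n k : ℕ) (h : n ≤ k) : ((p : ZMod (p ^ n))) ^ k = 0 := by
  have h0 : ((p : ZMod (p ^ n))) ^ n = 0 := by rw [← Nat.cast_pow, ZMod.natCast_self]
  calc ((p : ZMod (p ^ n))) ^ k = (p : ZMod (p ^ n)) ^ n * (p : ZMod (p ^ n)) ^ (k - n) := by
        rw [← pow_add, Nat.add_sub_cancel' h]
    _ = 0 := by rw [h0, zero_mul]

instance Asub_bounded (p l : ℕ) [Fact p.Prime] : BoundedSub (Asub p l) (p ^ 4) := by
  constructor
  rintro ⟨a, ha⟩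
  simp only
  induction ha using AddSubgroup.closure_induction with
  | mem b hb =>
    rcases hb with rfl | rfl
    · show p ^ 4 • ugen p = 0
      simp only [ugen, xgen, ygen, zgen, smul_add, smul_smul, Prod.smul_mk, Prod.mk_add_mk,
        smul_zero, nsmul_eq_mul, Nat.cast_pow, mul_one, add_zero, zero_add, mul_zero]
      refine Prod.ext ?_ (Prod.ext ?_ ?_)
      · show (p : ZMod (p ^ 6)) ^ 4 * (p : ZMod (p ^ 6)) ^ 2 = 0
        rw [← pow_add]; exact ppow_zero p 6 6 le_rfl
      · show (p : ZMod (p ^ 4)) ^ 4 * (p : ZMod (p ^ 4)) = 0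
        rw [← pow_succ]; exact ppow_zero p 4 5 (by norm_num)
      · show (p : ZMod (p ^ 2)) ^ 4 = 0
        exact ppow_zero p 2 4 (by norm_num)
    · show p ^ 4 • vgen p l = 0
      simp only [vgen, ygen, zgen, smul_add, smul_smul, Prod.smul_mk, Prod.mk_add_mk,
        smul_zero, nsmul_eq_mul, Nat.cast_pow, Nat.cast_mul, mul_one, add_zero, zero_add,
        mul_zero]
      refine Prod.ext ?_ (Prod.ext ?_ ?_)
      · show (0 : ZMod (p ^ 6)) = 0
        rfl
      · show (p : ZMod (p ^ 4)) ^ 4 * (p : ZMod (p ^ 4)) ^ 2 = 0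
        rw [← pow_add]; exact ppow_zero p 4 6 (by norm_num)
      · show (p : ZMod (p ^ 2)) ^ 4 * ((p : ZMod (p ^ 2)) * l) = 0
        rw [ppow_zero p 2 4 (by norm_num), zero_mul]
  | zero => simp
  | add x y hx hy hx' hy' => simp [smul_add, hx', hy']
  | neg x hx hx' => simp [hx']


section Aux
set_option linter.unusedSectionVars false

variable (p : ℕ) [Fact p.Prime] (l : ℕ)

lemma Mmul_def (g h : Asub p l × Bb p × ZMod (p ^ 4)) :
    g * h = (g.1 + h.1, g.2.1 + g.2.2.val • ((h.1 : Bb p)) + h.2.1, g.2.2 + h.2.2) := rfl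

lemma Mone_def : (1 : Asub p l × Bb p × ZMod (p ^ 4)) = (0, 0, 0) := rfl

lemma Minv_def (g : Asub p l × Bb p × ZMod (p ^ 4)) :
    g⁻¹ = (-g.1, -g.2.1 + g.2.2.val • ((g.1 : Bb p)), -g.2.2) := rfl

lemma cast_ppow_eq_zero (m k : ℕ) (h : m ≤ k) : ((p ^ k : ℕ) : ZMod (p ^ m)) = 0 := by
  haveI : NeZero (p ^ m) := ⟨pow_ne_zero m (Fact.out : p.Prime).ne_zero⟩
  exact (ZMod.natCast_eq_zero_iff _ _).mpr (pow_dvd_pow p h)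

lemma cast_ppow_ne_zero (m k : ℕ) (h : k < m) : ((p ^ k : ℕ) : ZMod (p ^ m)) ≠ 0 := by
  haveI : NeZero (p ^ m) := ⟨pow_ne_zero m (Fact.out : p.Prime).ne_zero⟩
  intro hc
  rw [ZMod.natCast_eq_zero_iff] at hc
  have h1 := Nat.le_of_dvd (pow_pos (Fact.out : p.Prime).pos k) hc
  exact absurd h1 (not_le.mpr (Nat.pow_lt_pow_right (Fact.out : p.Prime).one_lt h))

lemma ugen_eq : ugen p = (((p ^ 2 : ℕ) : ZMod (p ^ 6)), ((p : ℕ) : ZMod (p ^ 4)), (1 : ZMod (p ^ 2))) := by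
  refine Prod.ext ?_ (Prod.ext ?_ ?_) <;>
    simp [ugen, xgen, ygen, zgen, nsmul_eq_mul]

lemma vgen_eq : vgen p l = (0, ((p ^ 2 : ℕ) : ZMod (p ^ 4)), ((p * l : ℕ) : ZMod (p ^ 2))) := by
  refine Prod.ext ?_ (Prod.ext ?_ ?_) <;>
    simp [vgen, ygen, zgen, nsmul_eq_mul]

lemma hBexp (b : Bb p) : (p ^ 6) • b = 0 := by
  refine Prod.ext ?_ (Prod.ext ?_ ?_)
  · show (p ^ 6) • b.1 = 0
    rw [nsmul_eq_mul, cast_ppow_eq_zero p 6 6 le_rfl, zero_mul]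
  · show (p ^ 6) • b.2.1 = 0
    rw [nsmul_eq_mul, cast_ppow_eq_zero p 4 6 (by norm_num), zero_mul]
  · show (p ^ 6) • b.2.2 = 0
    rw [nsmul_eq_mul, cast_ppow_eq_zero p 2 6 (by norm_num), zero_mul]

lemma hu4 : (p ^ 4) • ugen p = 0 :=
  BoundedSub.bound (A := Asub p 0) (n := p ^ 4)
    ⟨ugen p, AddSubgroup.subset_closure (Or.inl rfl)⟩

lemma hv2 : (p ^ 2) • vgen p l = 0 := by
  rw [vgen_eq]
  refine Prod.ext ?_ (Prod.ext ?_ ?_)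
  · show (p ^ 2) • (0 : ZMod (p ^ 6)) = 0
    exact smul_zero _
  · show (p ^ 2) • ((p ^ 2 : ℕ) : ZMod (p ^ 4)) = 0
    rw [nsmul_eq_mul, ← Nat.cast_mul, ← pow_add]
    exact cast_ppow_eq_zero p 4 4 le_rfl
  · show (p ^ 2) • ((p * l : ℕ) : ZMod (p ^ 2)) = 0
    rw [nsmul_eq_mul, cast_ppow_eq_zero p 2 2 le_rfl, zero_mul]

lemma sum_range_ppow_dvd : p ^ 4 ∣ ∑ i ∈ Finset.range (p ^ 6), i := by
  have h2 : (∑ i ∈ Finset.range (p ^ 6), i) * 2 = p ^ 6 * (p ^ 6 - 1) :=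
    Finset.sum_range_id_mul_two _
  rcases (Fact.out : p.Prime).eq_two_or_odd' with rfl | hodd
  · norm_num [Finset.sum_range_id]
  · have he : 2 ∣ p ^ 6 - 1 := (Nat.Odd.sub_odd (hodd.pow) odd_one).two_dvd
    obtain ⟨m, hm⟩ := he
    have hS : (∑ i ∈ Finset.range (p ^ 6), i) = p ^ 6 * m := by
      have h3 : (∑ i ∈ Finset.range (p ^ 6), i) * 2 = (p ^ 6 * m) * 2 := by
        rw [h2, hm]; ring
      exact Nat.eq_of_mul_eq_mul_right (by norm_num) h3
    rw [hS]
    exact Dvd.dvd.mul_right (pow_dvd_pow p (by norm_num)) m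

lemma Mpow (g : Asub p l × Bb p × ZMod (p ^ 4)) (k : ℕ) :
    g ^ k = (k • g.1,
      k • g.2.1 + (∑ i ∈ Finset.range k, (i • g.2.2).val) • (g.1 : Bb p),
      k • g.2.2) := by
  induction k with
  | zero => simp [Mone_def]
  | succ k ih =>
    rw [pow_succ g k]
    rw [ih]
    rw [Mmul_def]
    refine Prod.ext ?_ (Prod.ext ?_ ?_)
    · show k • g.1 + g.1 = (k + 1) • g.1
      rw [succ_nsmul]
    · show (k • g.2.1 + (∑ i ∈ Finset.range k, (i • g.2.2).val) • (g.1 : Bb p))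
          + (k • g.2.2).val • (g.1 : Bb p) + g.2.1
          = (k + 1) • g.2.1 + (∑ i ∈ Finset.range (k + 1), (i • g.2.2).val) • (g.1 : Bb p)
      rw [Finset.sum_range_succ, add_nsmul, succ_nsmul, add_nsmul]
      abel
    · show k • g.2.2 + g.2.2 = (k + 1) • g.2.2
      rw [succ_nsmul]

lemma Mpow_central (b : Bb p) (k : ℕ) :
    (((0 : Asub p l), b, (0 : ZMod (p ^ 4))) : Asub p l × Bb p × ZMod (p ^ 4)) ^ k
      = (0, k • b, 0) := by
  rw [Mpow]
  simp

lemma sum_smul_eq_zero (d : ZMod (p ^ 4)) (a : Bb p) (ha : (p ^ 4) • a = 0) :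
    (∑ i ∈ Finset.range (p ^ 6), (i • d).val) • a = 0 := by
  have h1 : ∀ i : ℕ, ((i • d).val) • a = (i * d.val) • a := by
    intro i
    have h0 : (i • d) = ((i * d.val : ℕ) : ZMod (p ^ 4)) := by
      rw [nsmul_eq_mul, Nat.cast_mul, ZMod.natCast_val, ZMod.cast_id]
    rw [h0, ZMod.val_natCast, val_smul_eq _ ha]
  have h2 : (∑ i ∈ Finset.range (p ^ 6), (i • d).val) • a
      = ∑ i ∈ Finset.range (p ^ 6), ((i • d).val) • a := Finset.sum_smul
  rw [h2]
  have h3 : ∀ i ∈ Finset.range (p ^ 6), ((i • d).val) • a = (i * d.val) • a :=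
    fun i _ => h1 i
  rw [Finset.sum_congr rfl h3, ← Finset.sum_smul, ← Finset.sum_mul]
  obtain ⟨c, hc⟩ := (sum_range_ppow_dvd p).mul_right d.val
  rw [hc, mul_nsmul, ha, smul_zero]

lemma Mpow_p6 (g : Asub p l × Bb p × ZMod (p ^ 4)) : g ^ (p ^ 6) = 1 := by
  have hbd : (p ^ 4) • (g.1 : Bb p) = 0 := BoundedSub.bound g.1
  rw [Mpow, Mone_def]
  refine Prod.ext ?_ (Prod.ext ?_ ?_)
  · show (p ^ 6) • g.1 = 0
    have h4 : (p ^ 4) • g.1 = 0 := Subtype.ext (by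
      push_cast
      exact hbd)
    have h6 : p ^ 6 • g.1 = p ^ 2 • (p ^ 4 • g.1) := by rw [← mul_nsmul]; ring_nf
    rw [h6, h4, smul_zero]
  · show (p ^ 6) • g.2.1 + (∑ i ∈ Finset.range (p ^ 6), (i • g.2.2).val) • (g.1 : Bb p) = 0
    rw [hBexp, sum_smul_eq_zero p _ _ hbd, add_zero]
  · show (p ^ 6) • g.2.2 = 0
    rw [nsmul_eq_mul, cast_ppow_eq_zero p 4 6 (by norm_num), zero_mul]

lemma orderOf_zx :
    orderOf (((0 : Asub p l), xgen p, (0 : ZMod (p ^ 4))) : Asub p l × Bb p × ZMod (p ^ 4))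
      = p ^ 6 := by
  have h := orderOf_eq_prime_pow (p := p) (n := 5)
    (x := (((0 : Asub p l), xgen p, (0 : ZMod (p ^ 4))) : Asub p l × Bb p × ZMod (p ^ 4)))
    (by
      rw [Mpow_central]
      intro hc
      have h2 := congrArg (fun t => t.2.1.1) hc
      simp only [xgen, Prod.smul_mk, smul_zero, nsmul_eq_mul, mul_one] at h2
      exact cast_ppow_ne_zero p 6 5 (by norm_num) h2)
    (by
      show _ ^ (p ^ 6) = 1
      exact Mpow_p6 p l _)
  simpa using h

lemma zx_mem_center :
    (((0 : Asub p l), xgen p, (0 : ZMod (p ^ 4))) : Asub p l × Bb p × ZMod (p ^ 4))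
      ∈ Subgroup.center (Asub p l × Bb p × ZMod (p ^ 4)) := by
  rw [Subgroup.mem_center_iff]
  intro g
  rw [Mmul_def, Mmul_def]
  refine Prod.ext ?_ (Prod.ext ?_ ?_)
  · show g.1 + (0 : Asub p l) = (0 : Asub p l) + g.1
    rw [zero_add, add_zero]
  · show g.2.1 + g.2.2.val • ((0 : Asub p l) : Bb p) + xgen p
        = xgen p + (0 : ZMod (p ^ 4)).val • (g.1 : Bb p) + g.2.1
    simp [add_comm]
  · show g.2.2 + (0 : ZMod (p ^ 4)) = (0 : ZMod (p ^ 4)) + g.2.2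
    rw [zero_add, add_zero]

lemma u_mem : ugen p ∈ Asub p l := AddSubgroup.subset_closure (Or.inl rfl)

lemma v_mem : vgen p l ∈ Asub p l := AddSubgroup.subset_closure (Or.inr rfl)

lemma orderOf_zu :
    orderOf (((0 : Asub p l), ugen p, (0 : ZMod (p ^ 4))) : Asub p l × Bb p × ZMod (p ^ 4))
      = p ^ 4 := by
  have h := orderOf_eq_prime_pow (p := p) (n := 3)
    (x := (((0 : Asub p l), ugen p, (0 : ZMod (p ^ 4))) : Asub p l × Bb p × ZMod (p ^ 4)))
    (by
      rw [Mpow_central]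
      intro hc
      have h2 := congrArg (fun t => t.2.1.1) hc
      rw [ugen_eq] at h2
      simp only [Prod.smul_mk, smul_zero, nsmul_eq_mul, Nat.cast_pow] at h2
      rw [← Nat.cast_pow, ← Nat.cast_pow, ← Nat.cast_mul, ← pow_add] at h2
      exact cast_ppow_ne_zero p 6 5 (by norm_num) h2)
    (by
      show _ ^ (p ^ 4) = 1
      rw [Mpow_central, Mone_def, hu4])
  simpa using h

/-- The subgroup `{0} × A × {0}` that contains the commutator subgroup. -/
def Ksub : Subgroup (Asub p l × Bb p × ZMod (p ^ 4)) where
  carrier := {g | g.1 = 0 ∧ g.2.1 ∈ Asub p l ∧ g.2.2 = 0}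
  one_mem' := ⟨rfl, zero_mem _, rfl⟩
  mul_mem' := by
    rintro g h ⟨hg1, hg2, hg3⟩ ⟨hh1, hh2, hh3⟩
    refine ⟨?_, ?_, ?_⟩
    · show g.1 + h.1 = 0
      rw [hg1, hh1, add_zero]
    · show g.2.1 + g.2.2.val • ((h.1 : Bb p)) + h.2.1 ∈ Asub p l
      exact add_mem (add_mem hg2 (AddSubgroup.nsmul_mem _ h.1.2 _)) hh2
    · show g.2.2 + h.2.2 = 0
      rw [hg3, hh3, add_zero]
  inv_mem' := by
    rintro g ⟨h1, h2, h3⟩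
    refine ⟨?_, ?_, ?_⟩
    · show -g.1 = 0
      rw [h1, neg_zero]
    · show -g.2.1 + g.2.2.val • ((g.1 : Bb p)) ∈ Asub p l
      exact add_mem (neg_mem h2) (AddSubgroup.nsmul_mem _ g.1.2 _)
    · show -g.2.2 = 0
      rw [h3, neg_zero]

lemma commutator_le_Ksub :
    commutator (Asub p l × Bb p × ZMod (p ^ 4)) ≤ Ksub p l := by
  rw [commutator_def, Subgroup.commutator_le]
  intro g _ h _
  rw [commutatorElement_def]
  refine ⟨?_, ?_, ?_⟩
  · show g.1 + h.1 + -g.1 + -h.1 = 0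
    abel
  · show g.2.1 + g.2.2.val • ((h.1 : Bb p)) + h.2.1
        + (g.2.2 + h.2.2).val • (((-g.1 : Asub p l) : Bb p))
        + (-g.2.1 + g.2.2.val • ((g.1 : Bb p)))
        + (g.2.2 + h.2.2 + -g.2.2).val • (((-h.1 : Asub p l) : Bb p))
        + (-h.2.1 + h.2.2.val • ((h.1 : Bb p))) ∈ Asub p l
    have e2 : g.2.1 + g.2.2.val • ((h.1 : Bb p)) + h.2.1
        + (g.2.2 + h.2.2).val • (((-g.1 : Asub p l) : Bb p))
        + (-g.2.1 + g.2.2.val • ((g.1 : Bb p)))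
        + (g.2.2 + h.2.2 + -g.2.2).val • (((-h.1 : Asub p l) : Bb p))
        + (-h.2.1 + h.2.2.val • ((h.1 : Bb p)))
        = g.2.2.val • ((h.1 : Bb p))
        + (g.2.2 + h.2.2).val • (((-g.1 : Asub p l) : Bb p))
        + g.2.2.val • ((g.1 : Bb p))
        + (g.2.2 + h.2.2 + -g.2.2).val • (((-h.1 : Asub p l) : Bb p))
        + h.2.2.val • ((h.1 : Bb p)) := by abel
    rw [e2]
    exact add_mem (add_mem (add_mem (add_mem
      (AddSubgroup.nsmul_mem _ (SetLike.coe_mem _) _)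
      (AddSubgroup.nsmul_mem _ (SetLike.coe_mem _) _))
      (AddSubgroup.nsmul_mem _ (SetLike.coe_mem _) _))
      (AddSubgroup.nsmul_mem _ (SetLike.coe_mem _) _))
      (AddSubgroup.nsmul_mem _ (SetLike.coe_mem _) _)
  · show g.2.2 + h.2.2 + -g.2.2 + -h.2.2 = 0
    abel

lemma fact_one_lt_ppow (k : ℕ) (hk : 0 < k) : Fact (1 < p ^ k) :=
  ⟨Nat.one_lt_pow hk.ne' (Fact.out : p.Prime).one_lt⟩

open scoped commutatorElement in
lemma zu_mem_commutator :
    (((0 : Asub p l), ugen p, (0 : ZMod (p ^ 4))) : Asub p l × Bb p × ZMod (p ^ 4))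
      ∈ commutator (Asub p l × Bb p × ZMod (p ^ 4)) := by
  haveI : Fact (1 < p ^ 4) := fact_one_lt_ppow p 4 (by norm_num)
  have key : (((0 : Asub p l), ugen p, (0 : ZMod (p ^ 4))) : Asub p l × Bb p × ZMod (p ^ 4))
      = ⁅(((0 : Asub p l), (0 : Bb p), (1 : ZMod (p ^ 4))) : Asub p l × Bb p × ZMod (p ^ 4)),
        ((⟨ugen p, u_mem p l⟩, (0 : Bb p), (0 : ZMod (p ^ 4))) :
          Asub p l × Bb p × ZMod (p ^ 4))⁆ := by
    rw [commutatorElement_def]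
    refine Prod.ext ?_ (Prod.ext ?_ ?_)
    · show (0 : Asub p l) = 0 + ⟨ugen p, u_mem p l⟩ + -(0 : Asub p l) + -⟨ugen p, u_mem p l⟩
      simp
    · show ugen p = (0 : Bb p) + (1 : ZMod (p ^ 4)).val • ((⟨ugen p, u_mem p l⟩ : Asub p l) : Bb p)
          + (0 : Bb p)
          + (1 + 0 : ZMod (p ^ 4)).val • (((-(0 : Asub p l)) : Asub p l) : Bb p)
          + (-(0 : Bb p) + (1 : ZMod (p ^ 4)).val • (((0 : Asub p l)) : Bb p))
          + (1 + 0 + -1 : ZMod (p ^ 4)).val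
              • (((-(⟨ugen p, u_mem p l⟩ : Asub p l)) : Asub p l) : Bb p)
          + (-(0 : Bb p) + (0 : ZMod (p ^ 4)).val • (((⟨ugen p, u_mem p l⟩ : Asub p l)) : Bb p))
      simp [ZMod.val_one, ZMod.val_zero]
    · show (0 : ZMod (p ^ 4)) = 1 + 0 + -1 + -0
      simp
  rw [key, commutator_def]
  exact Subgroup.commutator_mem_commutator (Subgroup.mem_top _) (Subgroup.mem_top _)

lemma card_Asub : Nat.card (Asub p l) = p ^ 6 := by
  haveI : Fact (1 < p ^ 4) := fact_one_lt_ppow p 4 (by norm_num)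
  haveI : Fact (1 < p ^ 2) := fact_one_lt_ppow p 2 (by norm_num)
  haveI : NeZero (p ^ 4) := ⟨pow_ne_zero 4 (Fact.out : p.Prime).ne_zero⟩
  haveI : NeZero (p ^ 2) := ⟨pow_ne_zero 2 (Fact.out : p.Prime).ne_zero⟩
  have hu : (((p ^ 4 : ℕ) : ℤ)) • ugen p = 0 := by
    rw [natCast_zsmul]; exact hu4 p
  have hv : (((p ^ 2 : ℕ) : ℤ)) • vgen p l = 0 := by
    rw [natCast_zsmul]; exact hv2 p l
  set F1 : ZMod (p ^ 4) →+ Bb p :=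
    ZMod.lift (p ^ 4) ⟨zmultiplesHom (Bb p) (ugen p), by
      show ((p ^ 4 : ℕ) : ℤ) • ugen p = 0
      exact hu⟩ with hF1
  set F2 : ZMod (p ^ 2) →+ Bb p :=
    ZMod.lift (p ^ 2) ⟨zmultiplesHom (Bb p) (vgen p l), by
      show ((p ^ 2 : ℕ) : ℤ) • vgen p l = 0
      exact hv⟩ with hF2
  have hF1app : ∀ i : ZMod (p ^ 4), F1 i = i.val • ugen p := by
    intro i
    conv_lhs => rw [← ZMod.natCast_rightInverse i]
    rw [← Int.cast_natCast, hF1, ZMod.lift_coe]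
    show ((i.val : ℤ)) • ugen p = i.val • ugen p
    rw [natCast_zsmul]
  have hF2app : ∀ j : ZMod (p ^ 2), F2 j = j.val • vgen p l := by
    intro j
    conv_lhs => rw [← ZMod.natCast_rightInverse j]
    rw [← Int.cast_natCast, hF2, ZMod.lift_coe]
    show ((j.val : ℤ)) • vgen p l = j.val • vgen p l
    rw [natCast_zsmul]
  set F : ZMod (p ^ 4) × ZMod (p ^ 2) →+ Bb p :=
    F1.comp (AddMonoidHom.fst _ _) + F2.comp (AddMonoidHom.snd _ _) with hF
  have hFapp : ∀ w : ZMod (p ^ 4) × ZMod (p ^ 2),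
      F w = w.1.val • ugen p + w.2.val • vgen p l := by
    intro w
    rw [hF]
    simp only [AddMonoidHom.add_apply, AddMonoidHom.coe_comp, Function.comp_apply,
      AddMonoidHom.coe_fst, AddMonoidHom.coe_snd]
    rw [hF1app, hF2app]
  have hinj : Function.Injective F := by
    rw [injective_iff_map_eq_zero]
    rintro ⟨i, j⟩ hw
    rw [hFapp] at hw
    rw [ugen_eq, vgen_eq] at hw
    have h1 : i.val • ((p ^ 2 : ℕ) : ZMod (p ^ 6)) + j.val • (0 : ZMod (p ^ 6)) = 0 :=
      congrArg (fun t => t.1) hw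
    rw [smul_zero, add_zero, nsmul_eq_mul, ← Nat.cast_mul] at h1
    haveI : NeZero (p ^ 6) := ⟨pow_ne_zero 6 (Fact.out : p.Prime).ne_zero⟩
    rw [ZMod.natCast_eq_zero_iff] at h1
    have h1' : p ^ 4 ∣ i.val := by
      have : p ^ 4 * p ^ 2 ∣ i.val * p ^ 2 := by
        rw [← pow_add]; exact h1
      exact (Nat.mul_dvd_mul_iff_right (pow_pos (Fact.out : p.Prime).pos 2)).mp this
    have hi : i = 0 := by
      have := Nat.eq_zero_of_dvd_of_lt h1' (ZMod.val_lt i)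
      · exact (ZMod.val_eq_zero i).mp (by omega)
    subst hi
    have h2 : (0 : ZMod (p ^ 4)).val • ((p : ℕ) : ZMod (p ^ 4))
        + j.val • ((p ^ 2 : ℕ) : ZMod (p ^ 4)) = 0 := congrArg (fun t => t.2.1) hw
    rw [ZMod.val_zero, zero_smul, zero_add, nsmul_eq_mul, ← Nat.cast_mul] at h2
    rw [ZMod.natCast_eq_zero_iff] at h2
    have h2' : p ^ 2 ∣ j.val := by
      have : p ^ 2 * p ^ 2 ∣ j.val * p ^ 2 := by
        rw [← pow_add]; exact h2
      exact (Nat.mul_dvd_mul_iff_right (pow_pos (Fact.out : p.Prime).pos 2)).mp this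
    have hj : j = 0 := by
      have := Nat.eq_zero_of_dvd_of_lt h2' (ZMod.val_lt j)
      · exact (ZMod.val_eq_zero j).mp (by omega)
    subst hj
    rfl
  have hrange : F.range = Asub p l := by
    apply le_antisymm
    · rintro b ⟨⟨i, j⟩, rfl⟩
      rw [hFapp]
      exact add_mem (nsmul_mem (u_mem p l) _) (nsmul_mem (v_mem p l) _)
    · refine (AddSubgroup.closure_le _).mpr ?_
      intro b hb
      rcases hb with rfl | rfl
      · show ugen p ∈ F.range
        refine ⟨(1, 0), ?_⟩
        rw [hFapp]
        simp [ZMod.val_one, ZMod.val_zero]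
      · show vgen p l ∈ F.range
        refine ⟨(0, 1), ?_⟩
        rw [hFapp]
        simp [ZMod.val_one, ZMod.val_zero]
  calc Nat.card (Asub p l) = Nat.card F.range := by rw [hrange]
    _ = Nat.card (ZMod (p ^ 4) × ZMod (p ^ 2)) :=
        (Nat.card_congr (AddMonoidHom.ofInjective hinj).toEquiv).symm
    _ = p ^ 4 * p ^ 2 := by rw [Nat.card_prod, Nat.card_zmod, Nat.card_zmod]
    _ = p ^ 6 := by ring

end Aux

/-- The group `M_λ = G(A_λ ⊆ B)` of order `p²²` has exponent `p⁶`, its center has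
exponent `p⁶`, and its commutator subgroup has exponent `p⁴`. -/
theorem birkhoff_group_exponents (p : ℕ) [Fact p.Prime] (l : ℕ) (hl : l < p) :
    Nat.card (Asub p l × Bb p × ZMod (p ^ 4)) = p ^ 22 ∧
    Monoid.exponent (Asub p l × Bb p × ZMod (p ^ 4)) = p ^ 6 ∧
    Monoid.exponent (Subgroup.center (Asub p l × Bb p × ZMod (p ^ 4))) = p ^ 6 ∧
    Monoid.exponent (commutator (Asub p l × Bb p × ZMod (p ^ 4))) = p ^ 4 := by
  refine ⟨?_, ?_, ?_, ?_⟩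
  · simp only [Nat.card_prod, Nat.card_zmod, card_Asub p l]
    ring
  · apply Nat.dvd_antisymm
    · exact Monoid.exponent_dvd_of_forall_pow_eq_one (Mpow_p6 p l)
    · have h := Monoid.order_dvd_exponent
        ((((0 : Asub p l), xgen p, (0 : ZMod (p ^ 4)))) : Asub p l × Bb p × ZMod (p ^ 4))
      rwa [orderOf_zx] at h
  · apply Nat.dvd_antisymm
    · apply Monoid.exponent_dvd_of_forall_pow_eq_one
      rintro ⟨g, hg⟩
      apply Subtype.ext
      rw [SubmonoidClass.coe_pow, OneMemClass.coe_one]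
      exact Mpow_p6 p l g
    · have h := Monoid.order_dvd_exponent
        ((⟨_, zx_mem_center p l⟩ : Subgroup.center (Asub p l × Bb p × ZMod (p ^ 4))))
      rwa [Subgroup.orderOf_mk, orderOf_zx] at h
  · apply Nat.dvd_antisymm
    · apply Monoid.exponent_dvd_of_forall_pow_eq_one
      rintro ⟨g, hg⟩
      obtain ⟨h1, h2, h3⟩ := commutator_le_Ksub p l hg
      apply Subtype.ext
      rw [SubmonoidClass.coe_pow, OneMemClass.coe_one]
      obtain ⟨a, b, d⟩ := g
      have h1' : a = 0 := h1
      have h3' : d = 0 := h3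
      subst h1' h3'
      rw [Mpow_central, Mone_def]
      have hb : (p ^ 4) • b = 0 := BoundedSub.bound (A := Asub p l) (n := p ^ 4) ⟨b, h2⟩
      rw [hb]
    · have h := Monoid.order_dvd_exponent
        ((⟨_, zu_mem_commutator p l⟩ : commutator (Asub p l × Bb p × ZMod (p ^ 4))))
      rwa [Subgroup.orderOf_mk, orderOf_zu] at h
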